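/- If (𝐱*, 𝐳*) is a saddle point of F(𝐱, 𝐳) = f̃(𝐱) + 𝐱ᵀ𝐋𝐳 + ½ 𝐱ᵀ𝐋𝐱, where G is strongly connected and weight-balanced, then 𝐱* = 1_n ⊗ x* for some x* ∈ ℝ^d which is a global minimizer of f(x) = Σ_{i=1}^n f^i(x). -/

import Mathlib

open Matrix BigOperators

lemma laplacian_ker_const {n : ℕ} (A : Matrix (Fin n) (Fin n) ℝ)
    (hA : ∀ i j, 0 ≤ A i j)
    (hconn : ∀ i j : Fin n, i ≠ j → Relation.TransGen (fun a b => 0 < A a b) i j)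
    (v : Fin n → ℝ)
    (hv : ∀ j, ∑ i, A i j * (v j - v i) = 0) :
    ∀ i j, v i = v j := by
  intro i j
  obtain ⟨j0, -, hj0⟩ := Finset.exists_max_image (Finset.univ : Finset (Fin n)) v ⟨i, Finset.mem_univ i⟩
  have key : ∀ b, v b = v j0 → ∀ a, 0 < A a b → v a = v j0 := by
    intro b hb a hab
    have hterm : ∀ k ∈ Finset.univ, (0:ℝ) ≤ A k b * (v b - v k) := by
      intro k _
      have := hj0 k (Finset.mem_univ k)
      have : v k ≤ v b := by rw [hb]; exact hj0 k (Finset.mem_univ k)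
      exact mul_nonneg (hA k b) (by linarith)
    have hz := (Finset.sum_eq_zero_iff_of_nonneg hterm).1 (hv b) a (Finset.mem_univ a)
    rcases mul_eq_zero.1 hz with h | h
    · exact absurd h (ne_of_gt hab)
    · rw [← hb]; linarith
  have hall : ∀ a, v a = v j0 := by
    intro a
    rcases eq_or_ne a j0 with rfl | h
    · rfl
    · exact Relation.TransGen.head_induction_on (hconn a j0 h)
        (fun {a'} h' => key j0 rfl a' h')
        (fun {a' c} h' _ ih => key c ih a' h')
  rw [hall i, hall j]

theorem saddle_point_gives_minimizer
    {n d : ℕ} (A : Matrix (Fin n) (Fin n) ℝ)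
    (hA : ∀ i j, 0 ≤ A i j)
    (hconn : ∀ i j : Fin n, i ≠ j → Relation.TransGen (fun a b => 0 < A a b) i j)
    (hbal : ∀ i, ∑ j, A i j = ∑ j, A j i)
    (L : Matrix (Fin n) (Fin n) ℝ)
    (hL : L = Matrix.diagonal (fun i => ∑ j, A i j) - A)
    (BL : Matrix (Fin n × Fin d) (Fin n × Fin d) ℝ)
    (hBL : BL = Matrix.kroneckerMap (· * ·) L (1 : Matrix (Fin d) (Fin d) ℝ))
    (f : Fin n → (Fin d → ℝ) → ℝ)
    (hconv : ∀ i, ConvexOn ℝ Set.univ (f i))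
    (hlip : ∀ i, LocallyLipschitz (f i))
    (F : (Fin n × Fin d → ℝ) → (Fin n × Fin d → ℝ) → ℝ)
    (hF : F = fun X Z => (∑ i, f i (fun j => X (i, j))) + X ⬝ᵥ (BL *ᵥ Z)
        + (1 / 2) * (X ⬝ᵥ (BL *ᵥ X)))
    (Xs Zs : Fin n × Fin d → ℝ)
    (hsaddle : ∀ X Z, F Xs Z ≤ F Xs Zs ∧ F Xs Zs ≤ F X Zs) :
    ∃ xs : Fin d → ℝ, Xs = (fun p => xs p.2) ∧ ∀ y : Fin d → ℝ, ∑ i, f i xs ≤ ∑ i, f i y := by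
  rcases Nat.eq_zero_or_pos n with hn | hn
  · subst hn
    refine ⟨0, funext fun p => p.1.elim0, fun y => by simp⟩
  -- column sums of L vanish
  have hcol : ∀ j, ∑ i, L i j = 0 := by
    intro j
    subst hL
    simp only [Matrix.sub_apply, Matrix.diagonal_apply, Finset.sum_sub_distrib]
    rw [Finset.sum_ite_eq' Finset.univ j (fun i => ∑ k, A i k)]
    simp [hbal j]
  -- Step A : Xs ⬝ᵥ (BL *ᵥ W) = 0 for all W
  have hlin : ∀ W₁ W₂ : Fin n × Fin d → ℝ,
      Xs ⬝ᵥ (BL *ᵥ (W₁ + W₂)) = Xs ⬝ᵥ (BL *ᵥ W₁) + Xs ⬝ᵥ (BL *ᵥ W₂) := by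
    intro W₁ W₂
    rw [Matrix.mulVec_add, dotProduct_add]
  have hneg : ∀ W : Fin n × Fin d → ℝ,
      Xs ⬝ᵥ (BL *ᵥ (-W)) = -(Xs ⬝ᵥ (BL *ᵥ W)) := by
    intro W
    rw [Matrix.mulVec_neg, dotProduct_neg]
  have hle : ∀ Z, Xs ⬝ᵥ (BL *ᵥ Z) ≤ Xs ⬝ᵥ (BL *ᵥ Zs) := by
    intro Z
    have := (hsaddle Xs Z).1
    rw [hF] at this
    simp only at this
    linarith
  have hzero : ∀ W, Xs ⬝ᵥ (BL *ᵥ W) = 0 := by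
    intro W
    have h1 := hle (Zs + W)
    have h2 := hle (Zs + -W)
    rw [hlin] at h1 h2
    rw [hneg] at h2
    linarith
  -- Step B : column relations
  have hcolrel : ∀ (q : Fin d) (j : Fin n), ∑ i, A i j * (Xs (j, q) - Xs (i, q)) = 0 := by
    intro q j
    have h := hzero (Pi.single (j, q) 1)
    rw [Matrix.mulVec_single] at h
    have h' : ∑ p : Fin n × Fin d, Xs p * BL p (j, q) = 0 := by
      simpa [dotProduct] using h
    rw [Fintype.sum_prod_type] at h'
    subst hBL
    simp only [Matrix.kroneckerMap_apply, Matrix.one_apply, mul_ite, mul_one, mul_zero,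
      Finset.sum_ite_eq' Finset.univ q] at h'
    simp only [Finset.mem_univ, if_true] at h'
    -- h' : ∑ i, Xs (i, q) * L i j = 0
    have hLij : ∀ i, L i j = (if i = j then ∑ k, A j k else 0) - A i j := by
      intro i
      rw [hL]
      simp [Matrix.diagonal_apply]
      rcases eq_or_ne i j with rfl | h
      · simp
      · simp [h]
    have hexp : ∑ i, A i j * (Xs (j, q) - Xs (i, q))
        = ∑ i, Xs (i, q) * L i j := by
      have hb : ∑ k, A j k = ∑ i, A i j := hbal j
      calc ∑ i, A i j * (Xs (j, q) - Xs (i, q))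
          = (∑ i, A i j) * Xs (j, q) - ∑ i, A i j * Xs (i, q) := by
            rw [Finset.sum_mul]
            rw [← Finset.sum_sub_distrib]
            congr 1; ext i; ring
        _ = ∑ i, Xs (i, q) * L i j := by
            simp only [hLij, mul_sub]
            rw [Finset.sum_sub_distrib]
            simp only [mul_ite, mul_zero]
            rw [Finset.sum_ite_eq' Finset.univ j (fun i => Xs (i, q) * ∑ k, A j k)]
            simp only [Finset.mem_univ, if_true]
            rw [hb]
            congr 1
            · exact mul_comm _ _
            · exact Finset.sum_congr rfl fun i _ => mul_comm _ _
    rw [hexp, h']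
  -- Step C : constancy
  set i0 : Fin n := ⟨0, hn⟩
  set xs : Fin d → ℝ := fun q => Xs (i0, q) with hxs
  have hconst : ∀ i q, Xs (i, q) = xs q := by
    intro i q
    exact laplacian_ker_const A hA hconn (fun i => Xs (i, q)) (hcolrel q) i i0
  have hXseq : Xs = fun p => xs p.2 := by
    funext p
    exact hconst p.1 p.2
  refine ⟨xs, hXseq, ?_⟩
  -- Step D : minimization
  intro y
  set X : Fin n × Fin d → ℝ := fun p => y p.2 with hX
  -- X ⬝ᵥ (BL *ᵥ Z') = 0
  have hXzero : ∀ Z' : Fin n × Fin d → ℝ, X ⬝ᵥ (BL *ᵥ Z') = 0 := by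
    intro Z'
    have e1 : X ⬝ᵥ (BL *ᵥ Z') = ∑ i : Fin n, ∑ p : Fin d, y p * ∑ j : Fin n, L i j * Z' (j, p) := by
      subst hBL
      simp only [dotProduct, Matrix.mulVec, dotProduct, Fintype.sum_prod_type,
        Matrix.kroneckerMap_apply, Matrix.one_apply, mul_ite, mul_one, mul_zero,
        ite_mul, zero_mul, hX]
      refine Finset.sum_congr rfl fun i _ => Finset.sum_congr rfl fun p _ => ?_
      congr 1
      refine Finset.sum_congr rfl fun j _ => ?_
      simp [Finset.sum_ite_eq]
    rw [e1, Finset.sum_comm]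
    refine Finset.sum_eq_zero fun p _ => ?_
    rw [← Finset.mul_sum, Finset.sum_comm]
    have hz : ∀ j, ∑ i, L i j * Z' (j, p) = 0 := fun j => by
      rw [← Finset.sum_mul, hcol, zero_mul]
    simp [hz]
  have hmin := (hsaddle X Zs).2
  rw [hF] at hmin
  simp only at hmin
  rw [hzero Zs, hzero Xs, hXzero Zs, hXzero X] at hmin
  have hfx : ∀ i : Fin n, (fun j => Xs (i, j)) = xs := by
    intro i; funext j; exact hconst i j
  have hfy : ∀ i : Fin n, (fun j => X (i, j)) = y := by
    intro i; funext j; rfl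
  simp only [hfx, hfy] at hmin
  linarith
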